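/- Let N : L(H_A) → L(H_B) be a CPTP map, ρ_A ∈ L(H_A) a positive definite density operator, and ρ_B = N(ρ_A) positive definite. Then the Petz recovery map R(X) := ρ_A^{1/2} N†(ρ_B^{-1/2} X ρ_B^{-1/2}) ρ_A^{1/2} is a CPTP map from L(H_B) to L(H_A), and it satisfies R(ρ_B) = ρ_A. -/

import Mathlib

open Matrix
open scoped ComplexOrder

noncomputable section

/-- Complete positivity. -/
def IsCompletelyPositive {A B : Type*} [Fintype A] [Fintype B]
    (E : Matrix A A ℂ → Matrix B B ℂ) : Prop :=
  ∀ (k : ℕ) (P : Matrix (Fin k × A) (Fin k × A) ℂ), P.PosSemidef →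
    (Matrix.of fun p q : Fin k × B =>
      E (Matrix.of fun i j => P (p.1, i) (q.1, j)) p.2 q.2).PosSemidef

/-- Trace preserving. -/
def IsTracePreserving {A B : Type*} [Fintype A] [Fintype B]
    (E : Matrix A A ℂ → Matrix B B ℂ) : Prop :=
  ∀ X, (E X).trace = X.trace

namespace PetzAux

lemma trace_pair {n m : Type*} [Fintype n] [Fintype m] (X Y : Matrix n m ℂ) :
    Matrix.trace (Xᴴ * Y) = ∑ j, ∑ i, (starRingEnd ℂ) (X i j) * Y i j := by
  simp [Matrix.trace, Matrix.mul_apply, Matrix.conjTranspose_apply, Matrix.diag]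

lemma eq_of_pair {n : Type*} [Fintype n] [DecidableEq n] {M M' : Matrix n n ℂ}
    (h : ∀ X : Matrix n n ℂ, Matrix.trace (Xᴴ * M) = Matrix.trace (Xᴴ * M')) : M = M' := by
  ext i j
  have h1 := h (Matrix.single i j 1)
  rw [trace_pair, trace_pair] at h1
  simpa [Matrix.single, ite_and, apply_ite (starRingEnd ℂ), ite_mul, Finset.sum_ite_eq] using h1

lemma psd_of_quadform {n : Type*} [Fintype n] [DecidableEq n] {M : Matrix n n ℂ}
    (h : ∀ v : n → ℂ, 0 ≤ dotProduct (star v) (M *ᵥ v)) : M.PosSemidef := by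
  refine Matrix.PosSemidef.of_dotProduct_mulVec_nonneg ?_ h
  rw [Matrix.isHermitian_iff_isSymmetric, LinearMap.isSymmetric_iff_inner_map_self_real]
  intro v
  obtain ⟨x, rfl⟩ := (WithLp.equiv 2 (n → ℂ)).symm.surjective v
  rw [WithLp.equiv_symm_apply, Matrix.toEuclideanLin_toLp, EuclideanSpace.inner_toLp_toLp,
    Matrix.toLin'_apply]
  have h0 := h x
  have him : (dotProduct (star x) (M *ᵥ x)).im = 0 := by
    have := (Complex.le_def.mp h0).2
    simpa using this.symm
  have hre : (starRingEnd ℂ) (dotProduct (star x) (M *ᵥ x))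
      = dotProduct (star x) (M *ᵥ x) := Complex.conj_eq_iff_im.mpr him
  have hsw : dotProduct (star (M *ᵥ x)) x
      = (starRingEnd ℂ) (dotProduct (star x) (M *ᵥ x)) := by
    simp [dotProduct, Finset.mul_sum, map_sum, mul_comm]
  rw [dotProduct_comm x (star (M *ᵥ x)), hsw, hre, hre]


lemma trace_psd_nonneg {n : Type*} [Fintype n] [DecidableEq n] {Q : Matrix n n ℂ} (hQ : Q.PosSemidef) :
    0 ≤ Q.trace := by
  refine Finset.sum_nonneg fun i _ => ?_
  simpa [dotProduct, Matrix.mulVec, Pi.single_apply, apply_ite (starRingEnd ℂ), ite_mul] using hQ.dotProduct_mulVec_nonneg (Pi.single i 1)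

lemma trace_mul_psd_nonneg {n : Type*} [Fintype n] [DecidableEq n] {P Q : Matrix n n ℂ}
    (hP : P.PosSemidef) (hQ : Q.PosSemidef) : 0 ≤ (P * Q).trace := by
  obtain ⟨S, rfl⟩ : ∃ S : Matrix n n ℂ, P = Sᴴ * S := by
    open scoped MatrixOrder in
    obtain ⟨X, hX, -, rfl⟩ := CFC.exists_sqrt_of_isSelfAdjoint_of_quasispectrumRestricts
      hP.isHermitian (QuasispectrumRestricts.nnreal_of_nonneg hP.nonneg)
    exact ⟨X, by rw [← Matrix.star_eq_conjTranspose, hX.star_eq]⟩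
  rw [← Matrix.trace_mul_cycle]
  exact trace_psd_nonneg (hQ.mul_mul_conjTranspose_same S)

lemma outer_psd {n : Type*} [Fintype n] (v : n → ℂ) :
    (Matrix.of fun p q : n => v p * (starRingEnd ℂ) (v q)).PosSemidef := by
  refine Matrix.PosSemidef.of_dotProduct_mulVec_nonneg ?_ ?_
  · ext p q
    simp [Matrix.conjTranspose_apply, mul_comm]
  · intro x
    have : dotProduct (star x) ((Matrix.of fun p q : n => v p * (starRingEnd ℂ) (v q)) *ᵥ x)
        = star (∑ q, (starRingEnd ℂ) (v q) * x q) * (∑ q, (starRingEnd ℂ) (v q) * x q) := by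
      simp [dotProduct, Matrix.mulVec, Finset.sum_mul, Finset.mul_sum, map_sum]
      rw [Finset.sum_comm]
      refine Finset.sum_congr rfl fun p _ => Finset.sum_congr rfl fun q _ => ?_
      ring
    rw [this]
    exact star_mul_self_nonneg _


lemma cp_conj {A : Type*} [Fintype A] [DecidableEq A] (M : Matrix A A ℂ) :
    IsCompletelyPositive (fun X => Mᴴ * X * M) := by
  intro k P hP
  set D : Matrix (Fin k × A) (Fin k × A) ℂ :=
    Matrix.of fun p q => (if p.1 = q.1 then (1 : ℂ) else 0) * M p.2 q.2 with hD
  have key : (Matrix.of fun p q : Fin k × A =>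
      (Mᴴ * (Matrix.of fun i j => P (p.1, i) (q.1, j)) * M) p.2 q.2) = Dᴴ * P * D := by
    ext p q
    simp only [Matrix.of_apply, Matrix.mul_apply, Matrix.conjTranspose_apply, hD,
      Fintype.sum_prod_type, star_mul', apply_ite (star : ℂ → ℂ), star_one, star_zero]
    simp [ite_mul, mul_ite, zero_mul, mul_zero, one_mul, mul_one,
      Finset.sum_ite_irrel, Finset.sum_ite_eq, Finset.sum_ite_eq', Finset.sum_const_zero]
  rw [key]
  exact hP.conjTranspose_mul_mul_same D

lemma cp_comp {A B C : Type*} [Fintype A] [Fintype B] [Fintype C]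
    {E : Matrix A A ℂ → Matrix B B ℂ} {F : Matrix B B ℂ → Matrix C C ℂ}
    (hE : IsCompletelyPositive E) (hF : IsCompletelyPositive F) :
    IsCompletelyPositive (fun X => F (E X)) := by
  intro k P hP
  exact hF k _ (hE k P hP)


lemma cp_adjoint {A B : Type*} [Fintype A] [Fintype B] [DecidableEq A] [DecidableEq B]
    (N : Matrix A A ℂ →ₗ[ℂ] Matrix B B ℂ) (Ndag : Matrix B B ℂ →ₗ[ℂ] Matrix A A ℂ)
    (hadj : ∀ (X : Matrix A A ℂ) (Y : Matrix B B ℂ),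
      Matrix.trace ((N X)ᴴ * Y) = Matrix.trace (Xᴴ * Ndag Y))
    (hNcp : IsCompletelyPositive (fun X => N X)) :
    IsCompletelyPositive (fun Y => Ndag Y) := by
  intro k P hP
  apply psd_of_quadform
  intro v
  set C : Fin k → Fin k → Matrix A A ℂ :=
    fun i j => Matrix.of fun a b => v (i, a) * (starRingEnd ℂ) (v (j, b)) with hC
  set blk : Fin k → Fin k → Matrix B B ℂ :=
    fun i j => Matrix.of fun a b => P ((i, a)) ((j, b)) with hblk
  have hQ : (Matrix.of fun p q : Fin k × A =>
      v p * (starRingEnd ℂ) (v q)).PosSemidef := outer_psd v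
  have hW : (Matrix.of fun p q : Fin k × B => (N (C p.1 q.1)) p.2 q.2).PosSemidef :=
    hNcp k _ hQ
  set W : Matrix (Fin k × B) (Fin k × B) ℂ :=
    Matrix.of fun p q => (N (C p.1 q.1)) p.2 q.2 with hWdef
  have step1 : dotProduct (star v)
      ((Matrix.of fun p q : Fin k × A =>
        Ndag (Matrix.of fun i j => P (p.1, i) (q.1, j)) p.2 q.2) *ᵥ v)
      = ∑ i, ∑ j, Matrix.trace ((C i j)ᴴ * Ndag (blk i j)) := by
    simp only [trace_pair, dotProduct, Matrix.mulVec, Matrix.of_apply,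
      Fintype.sum_prod_type, Pi.star_apply, hC, hblk,
      Finset.mul_sum]
    refine Finset.sum_congr rfl fun i _ => ?_
    rw [Finset.sum_comm]
    refine Finset.sum_congr rfl fun j _ => ?_
    rw [Finset.sum_comm]
    refine Finset.sum_congr rfl fun b _ => ?_
    refine Finset.sum_congr rfl fun a _ => ?_
    simp only [_root_.map_mul, Complex.conj_conj, RCLike.star_def]
    ring
  have step2 : ∀ i j, Matrix.trace ((C i j)ᴴ * Ndag (blk i j))
      = Matrix.trace ((N (C i j))ᴴ * blk i j) := fun i j => (hadj (C i j) (blk i j)).symm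
  have step3 : ∑ i, ∑ j, Matrix.trace ((N (C i j))ᴴ * blk i j)
      = Matrix.trace (Wᴴ * P) := by
    simp only [trace_pair, Fintype.sum_prod_type, hWdef, Matrix.of_apply, hblk]
    rw [Finset.sum_comm]
    refine Finset.sum_congr rfl fun j _ => ?_
    rw [Finset.sum_comm]
  rw [step1]
  simp only [step2]
  rw [step3, hW.isHermitian.eq]
  exact trace_mul_psd_nonneg hW hP

end PetzAux

/-- the Petz recovery map
`R(X) = ρ_A^{1/2} N†(ρ_B^{-1/2} X ρ_B^{-1/2}) ρ_A^{1/2}` of a CPTP map `N` with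
positive definite reference state `ρ_A` and `ρ_B = N(ρ_A)` positive definite is a
CPTP map from `L(H_B)` to `L(H_A)` satisfying `R(ρ_B) = ρ_A`.
Here `sA = ρ_A^{1/2}` and `tB = ρ_B^{-1/2}` are Hermitian square roots and `N†`
is the Hilbert–Schmidt adjoint of `N`. -/
theorem petz_recovery_cptp {A B : Type*}
    [Fintype A] [Fintype B] [DecidableEq A] [DecidableEq B]
    (N : Matrix A A ℂ →ₗ[ℂ] Matrix B B ℂ)
    (Ndag : Matrix B B ℂ →ₗ[ℂ] Matrix A A ℂ)
    (hadj : ∀ (X : Matrix A A ℂ) (Y : Matrix B B ℂ),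
      Matrix.trace ((N X)ᴴ * Y) = Matrix.trace (Xᴴ * Ndag Y))
    (hNcp : IsCompletelyPositive (fun X => N X))
    (hNtp : IsTracePreserving (fun X => N X))
    (ρA : Matrix A A ℂ) (hρA : ρA.PosDef) (hρAtr : ρA.trace = 1)
    (ρB : Matrix B B ℂ) (hρB : ρB = N ρA) (hρBpd : ρB.PosDef)
    (sA : Matrix A A ℂ) (hsA : sA.IsHermitian) (hsA2 : sA * sA = ρA)
    (tB : Matrix B B ℂ) (htB : tB.IsHermitian) (htB2 : tB * tB = ρB⁻¹)
    (R : Matrix B B ℂ → Matrix A A ℂ)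
    (hR : ∀ X, R X = sA * Ndag (tB * X * tB) * sA) :
    IsCompletelyPositive R ∧ IsTracePreserving R ∧ R ρB = ρA := by
  have hdet : IsUnit ρB.det := (Matrix.isUnit_iff_isUnit_det ρB).mp hρBpd.isUnit
  have hinv1 : ρB * ρB⁻¹ = 1 := Matrix.mul_nonsing_inv ρB hdet
  have hinv2 : ρB⁻¹ * ρB = 1 := Matrix.nonsing_inv_mul ρB hdet
  have h1 : tB * ρB⁻¹ = ρB⁻¹ * tB := by
    calc tB * ρB⁻¹ = tB * (tB * tB) := by rw [htB2]
      _ = tB * tB * tB := by rw [Matrix.mul_assoc]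
      _ = ρB⁻¹ * tB := by rw [htB2]
  have hcomm : ρB * tB = tB * ρB := by
    have e1 : tB * ρB⁻¹ * ρB = tB := by rw [Matrix.mul_assoc, hinv2, Matrix.mul_one]
    have e2 : ρB * (ρB⁻¹ * tB) = tB := by rw [← Matrix.mul_assoc, hinv1, Matrix.one_mul]
    calc ρB * tB = ρB * (tB * ρB⁻¹ * ρB) := by rw [e1]
      _ = ρB * (ρB⁻¹ * tB * ρB) := by rw [h1]
      _ = ρB * (ρB⁻¹ * tB) * ρB := by simp only [Matrix.mul_assoc]
      _ = tB * ρB := by rw [e2]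
  have hkey : tB * ρB * tB = 1 := by
    calc tB * ρB * tB = ρB * tB * tB := by rw [← hcomm]
      _ = ρB * (tB * tB) := by rw [Matrix.mul_assoc]
      _ = ρB * ρB⁻¹ := by rw [htB2]
      _ = 1 := hinv1
  have hNdag1 : Ndag (1 : Matrix B B ℂ) = 1 := by
    apply PetzAux.eq_of_pair
    intro X
    rw [← hadj X 1, Matrix.mul_one, Matrix.mul_one, Matrix.trace_conjTranspose,
      Matrix.trace_conjTranspose, hNtp X]
  have hRρB : R ρB = ρA := by
    rw [hR ρB, hkey, hNdag1, Matrix.mul_one, hsA2]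
  have hTP : IsTracePreserving R := by
    intro X
    rw [hR, Matrix.trace_mul_cycle, hsA2]
    conv_lhs => rw [← hρA.1.eq]
    rw [← hadj, ← hρB, hρBpd.1.eq, ← Matrix.mul_assoc, Matrix.trace_mul_cycle,
      ← Matrix.mul_assoc, hkey, Matrix.one_mul]
  have hCP : IsCompletelyPositive R := by
    have hfun : R = fun X => (fun Z => sAᴴ * Z * sA) ((fun Y => Ndag Y)
        ((fun X => tBᴴ * X * tB) X)) := by
      funext X
      simp only [hR X, hsA.eq, htB.eq]
    rw [hfun]
    exact PetzAux.cp_comp (PetzAux.cp_comp (PetzAux.cp_conj tB)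
      (PetzAux.cp_adjoint N Ndag hadj hNcp)) (PetzAux.cp_conj sA)
  exact ⟨hCP, hTP, hRρB⟩
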